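/- Let E ∈ ℂ^{n×n} satisfy Eᵀ = E and E² = I_n, set P := (1/√2)(I_n + i·E) (so P is invertible with P^{-1} = (1/√2)(I_n − i·E), Pᵀ = P and P² = iE). Let J ∈ ℂ^{n×n} and S := P^{-1} J P. Then for every Q ∈ ℂ^{n×n}, setting X := P Q P^{-1}, the following are equivalent: (i) QᵀQ = I_n and QᵀSQ = S; (ii) JX = XJ and E Xᵀ E X = I_n. -/
import Mathlib


open Matrix

/-- With `Eᵀ = E`, `E² = 1`, `P = (1/√2)(1 + iE)` (whose inverse is
`(1/√2)(1 − iE)`), `S = P⁻¹JP` and `X = PQP⁻¹`, one has: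
`QᵀQ = 1 ∧ QᵀSQ = S` iff `JX = XJ ∧ EXᵀEX = 1`. -/
theorem stmt18 (n : ℕ) (E J S Q X P Pinv : Matrix (Fin n) (Fin n) ℂ)
    (hE : Eᵀ = E) (hE2 : E * E = 1)
    (hP : P = (Real.sqrt 2 : ℂ)⁻¹ • (1 + Complex.I • E))
    (hPinv : Pinv = (Real.sqrt 2 : ℂ)⁻¹ • (1 - Complex.I • E))
    (hS : S = Pinv * J * P)
    (hX : X = P * Q * Pinv) :
    (Qᵀ * Q = 1 ∧ Qᵀ * S * Q = S) ↔ (J * X = X * J ∧ E * Xᵀ * E * X = 1) := by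
  have hc : ((Real.sqrt 2 : ℂ)⁻¹) * (Real.sqrt 2 : ℂ)⁻¹ = (2:ℂ)⁻¹ := by
    rw [← mul_inv, ← Complex.ofReal_mul, Real.mul_self_sqrt (by norm_num)]
    norm_num
  have base : P * Pinv = 1 ∧ Pinv * P = 1 ∧ E * Pinv = (-Complex.I) • P
      ∧ P * E = Complex.I • Pinv := by
    refine ⟨?_, ?_, ?_, ?_⟩ <;>
    · rw [hP, hPinv]
      simp only [smul_mul_smul_comm, hc, mul_sub, sub_mul, add_mul, mul_add, one_mul, mul_one,
        smul_mul_assoc, mul_smul_comm, smul_smul, hE2]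
      match_scalars <;>
        first
          | ring1
          | linear_combination ((Real.sqrt 2:ℂ)⁻¹) * Complex.I_sq
          | linear_combination (-(Real.sqrt 2:ℂ)⁻¹) * Complex.I_sq
          | linear_combination (1 - Complex.I^2) * hc - (2:ℂ)⁻¹ * Complex.I_sq
          | linear_combination (Complex.I^2 - 1) * hc + (2:ℂ)⁻¹ * Complex.I_sq
  obtain ⟨h1, h2, hEPi, hPE⟩ := base
  have hPt : Pᵀ = P := by simp [hP, transpose_add, transpose_smul, hE]
  have hPinvt : Pinvᵀ = Pinv := by simp [hPinv, transpose_sub, transpose_smul, hE]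
  have cancelPiP : ∀ A : Matrix (Fin n) (Fin n) ℂ, Pinv * (P * A) = A := fun A => by
    rw [← mul_assoc, h2, one_mul]
  have cancelPPi : ∀ A : Matrix (Fin n) (Fin n) ℂ, P * (Pinv * A) = A := fun A => by
    rw [← mul_assoc, h1, one_mul]
  have conj_inj : ∀ {A B : Matrix (Fin n) (Fin n) ℂ},
      P * A * Pinv = P * B * Pinv → A = B := by
    intro A B h
    have h' := congrArg (fun M => Pinv * M * P) h
    simpa only [mul_assoc, cancelPiP, h2, mul_one] using h'
  have hXt : Xᵀ = Pinv * Qᵀ * P := by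
    simp [hX, Matrix.transpose_mul, hPt, hPinvt, mul_assoc]
  have hY : E * Xᵀ * E = P * Qᵀ * Pinv := by
    rw [hXt]
    calc E * (Pinv * Qᵀ * P) * E = (E * Pinv) * (Qᵀ * (P * E)) := by
          simp only [mul_assoc]
      _ = ((-Complex.I) • P) * (Qᵀ * (Complex.I • Pinv)) := by rw [hEPi, hPE]
      _ = P * Qᵀ * Pinv := by
          simp [smul_mul_assoc, mul_smul_comm, smul_smul, Complex.I_mul_I, mul_assoc]
  have e1 : E * Xᵀ * E * X = P * (Qᵀ * Q) * Pinv := by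
    rw [hY, hX]; simp only [mul_assoc, cancelPiP]
  have e2 : E * Xᵀ * E * J * X = P * (Qᵀ * S * Q) * Pinv := by
    rw [hY, hX, hS]; simp only [mul_assoc, cancelPiP]
  have e3 : P * S * Pinv = J := by
    rw [hS]; simp only [mul_assoc, cancelPPi, h1, mul_one]
  have key1 : (Qᵀ * Q = 1) ↔ (E * Xᵀ * E * X = 1) := by
    rw [e1]
    constructor
    · intro h; rw [h, mul_one, h1]
    · intro h; apply conj_inj; rw [mul_one, h1]; exact h
  constructor
  · rintro ⟨h1q, h2q⟩
    have hU : E * Xᵀ * E * X = 1 := key1.mp h1q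
    have hXU : X * (E * Xᵀ * E) = 1 := mul_eq_one_comm.mp hU
    refine ⟨?_, hU⟩
    have hYJX : E * Xᵀ * E * J * X = J := by rw [e2, h2q]; exact e3
    calc J * X = (X * (E * Xᵀ * E)) * (J * X) := by rw [hXU, one_mul]
      _ = X * (E * Xᵀ * E * J * X) := by simp only [mul_assoc]
      _ = X * J := by rw [hYJX]
  · rintro ⟨hcomm, hU⟩
    have h1q : Qᵀ * Q = 1 := key1.mpr hU
    refine ⟨h1q, ?_⟩
    apply conj_inj
    rw [← e2, e3]
    calc E * Xᵀ * E * J * X = (E * Xᵀ * E) * (J * X) := by rw [mul_assoc]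
      _ = (E * Xᵀ * E) * (X * J) := by rw [hcomm]
      _ = (E * Xᵀ * E * X) * J := by simp only [mul_assoc]
      _ = J := by rw [hU, one_mul]
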